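/- Let $\Theta = \mathbb{R} \times [\underline{\sigma}^2, \infty)$ for some $\underline{\sigma}^2 > 0$ and for $\theta = (\mu, \sigma^2) \in \Theta$ let $f_\theta$ be the density of $\mathcal{N}(\mu, \sigma^2)$. Let $Y$ be a real random variable with $\mathbb{E}[|Y - \mu_\star|] < \infty$, and fix $\theta_\star = (\mu_\star, \sigma_\star^2) \in \Theta$. Then there exists a constant $C' < \infty$ such that for all sufficiently large $C$, $\sup_{\theta \in \Theta : \|\theta - \theta_\star\| \geq C} \mathbb{E}[f_\theta(Y)] \leq C' C^{-1/2}$. Consequently $\limsup_{C \to \infty} \frac{\log\big(\sup_{\theta \in \Theta: \|\theta-\theta_\star\| \geq C} \mathbb{E}[f_\theta(Y)]\big)}{\log C} \leq -\frac{1}{2}$. -/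

import Mathlib

open MeasureTheory Filter

noncomputable def gaussDens (μ σ2 y : ℝ) : ℝ :=
  (Real.sqrt (2 * Real.pi * σ2))⁻¹ * Real.exp (-(y - μ) ^ 2 / (2 * σ2))

lemma gauss_nonneg (μ s y : ℝ) : 0 ≤ gaussDens μ s y := by
  unfold gaussDens; positivity

lemma gauss_le_inv (μ s y : ℝ) (hs : 0 < s) :
    gaussDens μ s y ≤ (Real.sqrt (2 * Real.pi * s))⁻¹ := by
  unfold gaussDens
  nth_rewrite 2 [← mul_one (Real.sqrt (2 * Real.pi * s))⁻¹]
  apply mul_le_mul_of_nonneg_left _ (by positivity)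
  rw [Real.exp_le_one_iff]
  apply div_nonpos_of_nonpos_of_nonneg (by simp [sq_nonneg]) (by positivity)

lemma sqrt_le_exp (x : ℝ) : Real.sqrt x ≤ Real.exp x := by
  rcases le_or_gt x 0 with h | h
  · calc Real.sqrt x ≤ Real.sqrt 0 := Real.sqrt_le_sqrt h
      _ = 0 := Real.sqrt_zero
      _ ≤ _ := (Real.exp_pos x).le
  · have h1 : x ≤ (x + 1) ^ 2 := by nlinarith
    have h2 := Real.sqrt_le_sqrt h1
    rw [Real.sqrt_sq (by linarith)] at h2
    linarith [Real.add_one_le_exp x]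

lemma exp_neg_le_inv_sqrt {x : ℝ} (hx : 0 < x) : Real.exp (-x) ≤ (Real.sqrt x)⁻¹ := by
  rw [Real.exp_neg]
  exact inv_anti₀ (Real.sqrt_pos.mpr hx) (sqrt_le_exp x)

lemma one_sub_le_exp_neg_sq {u : ℝ} (hu : 0 ≤ u) : 1 - u ≤ Real.exp (-(u ^ 2)) := by
  rcases le_or_gt u 1 with h | h
  · nlinarith [Real.add_one_le_exp (-(u ^ 2))]
  · linarith [(Real.exp_pos (-(u ^ 2))).le]

-- case-2 pointwise bound
lemma gauss_far {μ s y C : ℝ} (hs : 0 < s) (hC : 0 < C) (hfar : C / 4 ≤ |y - μ|) :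
    gaussDens μ s y ≤ 4 / C := by
  set a := C ^ 2 / (32 * s) with ha
  have hapos : 0 < a := by positivity
  have hsqle : (C / 4) ^ 2 ≤ (y - μ) ^ 2 := by
    rw [← sq_abs (y - μ)]
    exact pow_le_pow_left₀ (by positivity) hfar 2
  have h1 : gaussDens μ s y ≤ (Real.sqrt (2 * Real.pi * s))⁻¹ * (Real.sqrt a)⁻¹ := by
    unfold gaussDens
    apply mul_le_mul_of_nonneg_left _ (by positivity)
    calc Real.exp (-(y - μ) ^ 2 / (2 * s)) ≤ Real.exp (-a) := by
          apply Real.exp_le_exp.mpr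
          rw [ha, ← neg_div, div_le_div_iff₀ (by positivity) (by positivity)]
          nlinarith
      _ ≤ (Real.sqrt a)⁻¹ := exp_neg_le_inv_sqrt hapos
  refine h1.trans ?_
  rw [← mul_inv, ← Real.sqrt_mul (by positivity)]
  have h2 : 2 * Real.pi * s * a = Real.pi * (C / 4) ^ 2 := by
    rw [ha]; field_simp; ring
  rw [h2]
  have h3 : C / 4 ≤ Real.sqrt (Real.pi * (C / 4) ^ 2) := by
    rw [Real.sqrt_mul Real.pi_pos.le, Real.sqrt_sq (by positivity)]
    nth_rewrite 1 [← one_mul (C / 4)]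
    apply mul_le_mul_of_nonneg_right _ (by positivity)
    rw [show (1 : ℝ) = Real.sqrt 1 by simp]
    exact Real.sqrt_le_sqrt (by linarith [Real.pi_gt_three])
  calc (Real.sqrt (Real.pi * (C / 4) ^ 2))⁻¹ ≤ (C / 4)⁻¹ :=
        inv_anti₀ (by positivity) h3
    _ = 4 / C := by rw [inv_div]

set_option maxHeartbeats 1600000 in
theorem stmt_5 {Ω : Type*} [MeasurableSpace Ω]
    (P : Measure Ω) [IsProbabilityMeasure P]
    (Y : Ω → ℝ) (hY : Measurable Y)
    (μstar : ℝ) (hint : Integrable (fun ω => |Y ω - μstar|) P)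
    (σlb : ℝ) (hσlb : 0 < σlb)
    (σstar : ℝ) (hσstar : σlb ≤ σstar) :
    (∃ C' : ℝ, ∃ C₀ : ℝ, ∀ C ≥ C₀, ∀ θ : ℝ × ℝ, σlb ≤ θ.2 →
        C ≤ Real.sqrt ((θ.1 - μstar) ^ 2 + (θ.2 - σstar) ^ 2) →
        ∫ ω, gaussDens θ.1 θ.2 (Y ω) ∂P ≤ C' * C ^ (-(1 : ℝ) / 2)) ∧
      Filter.limsup (fun C : ℝ =>
          Real.log (sSup {x : ℝ | ∃ θ : ℝ × ℝ, σlb ≤ θ.2 ∧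
              C ≤ Real.sqrt ((θ.1 - μstar) ^ 2 + (θ.2 - σstar) ^ 2) ∧
              x = ∫ ω, gaussDens θ.1 θ.2 (Y ω) ∂P}) / Real.log C)
        atTop ≤ -(1 / 2) := by
  have hσstar0 : 0 < σstar := lt_of_lt_of_le hσlb hσstar
  obtain ⟨B₀, hB₀def⟩ : ∃ x : ℝ, x = (Real.sqrt (2 * Real.pi * σlb))⁻¹ := ⟨_, rfl⟩
  have hB₀pos : 0 < B₀ := by rw [hB₀def]; positivity
  obtain ⟨E, hEdef⟩ : ∃ x : ℝ, x = ∫ ω, |Y ω - μstar| ∂P := ⟨_, rfl⟩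
  have hEnn : 0 ≤ E := hEdef ▸ integral_nonneg fun ω => abs_nonneg _
  -- measurability
  have hmeas : ∀ μ s : ℝ, Measurable fun ω => gaussDens μ s (Y ω) := by
    intro μ s
    unfold gaussDens
    exact measurable_const.mul
      (Real.measurable_exp.comp (((hY.sub measurable_const).pow_const 2).neg.div_const _))
  -- pointwise bound by B₀
  have hptB : ∀ (μ s y : ℝ), σlb ≤ s → gaussDens μ s y ≤ B₀ := by
    intro μ s y hs
    rw [hB₀def]
    refine (gauss_le_inv μ s y (lt_of_lt_of_le hσlb hs)).trans ?_
    apply inv_anti₀ (by positivity)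
    apply Real.sqrt_le_sqrt
    nlinarith [Real.pi_pos]
  -- integrability
  have hintg : ∀ μ s : ℝ, σlb ≤ s → Integrable (fun ω => gaussDens μ s (Y ω)) P := by
    intro μ s hs
    refine ⟨(hmeas μ s).aestronglyMeasurable, HasFiniteIntegral.of_bounded (C := B₀) ?_⟩
    filter_upwards with ω
    rw [Real.norm_eq_abs, abs_of_nonneg (gauss_nonneg _ _ _)]
    exact hptB μ s (Y ω) hs
  -- the constants
  obtain ⟨C', hC'def⟩ : ∃ x : ℝ, x = 5 + 4 * B₀ * E := ⟨_, rfl⟩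
  have hC'pos : 0 < C' := by rw [hC'def]; positivity
  obtain ⟨C₀, hC₀def⟩ : ∃ x : ℝ, x = 2 * σstar + 2 := ⟨_, rfl⟩
  -- main uniform bound
  have hmain : ∀ C, C₀ ≤ C → ∀ θ : ℝ × ℝ, σlb ≤ θ.2 →
      C ≤ Real.sqrt ((θ.1 - μstar) ^ 2 + (θ.2 - σstar) ^ 2) →
      ∫ ω, gaussDens θ.1 θ.2 (Y ω) ∂P ≤ C' * C ^ (-(1 : ℝ) / 2) := by
    intro C hC θ hθ2 hdist
    have hC1 : 1 ≤ C := by rw [hC₀def] at hC; linarith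
    have hCpos : (0 : ℝ) < C := by linarith
    have hsC : Real.sqrt C ≤ C := (Real.sqrt_le_left hCpos.le).mpr (by nlinarith)
    have hsCpos : 0 < Real.sqrt C := Real.sqrt_pos.mpr hCpos
    have hrpow : C ^ (-(1 : ℝ) / 2) = (Real.sqrt C)⁻¹ := by
      rw [show (-(1 : ℝ) / 2) = -(1 / 2) by ring, Real.rpow_neg hCpos.le, ← Real.sqrt_eq_rpow]
    have hsq : C ^ 2 ≤ (θ.1 - μstar) ^ 2 + (θ.2 - σstar) ^ 2 := by
      have h := Real.sq_sqrt (show (0 : ℝ) ≤ (θ.1 - μstar) ^ 2 + (θ.2 - σstar) ^ 2 by positivity)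
      nlinarith [Real.sqrt_nonneg ((θ.1 - μstar) ^ 2 + (θ.2 - σstar) ^ 2)]
    rw [hrpow]
    by_cases hcase : (C / 2) ^ 2 ≤ (θ.1 - μstar) ^ 2
    · -- μ is far
      have hμfar : C / 2 ≤ |θ.1 - μstar| := by
        have := Real.sqrt_le_sqrt hcase
        rwa [Real.sqrt_sq (by positivity), Real.sqrt_sq_eq_abs] at this
      set A : Set Ω := {ω | C / 4 ≤ |Y ω - μstar|} with hAdef
      have hA : MeasurableSet A :=
        measurableSet_le measurable_const ((hY.sub measurable_const).abs)
      have hpoint : ∀ ω, gaussDens θ.1 θ.2 (Y ω) ≤ 4 / C + A.indicator (fun _ => B₀) ω := by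
        intro ω
        by_cases hω : ω ∈ A
        · rw [Set.indicator_of_mem hω]
          have h1 := hptB θ.1 θ.2 (Y ω) hθ2
          have h2 : (0 : ℝ) ≤ 4 / C := by positivity
          linarith
        · rw [Set.indicator_of_notMem hω, add_zero]
          have hω' : |Y ω - μstar| < C / 4 := by
            simpa [hAdef, not_le] using hω
          have htri : |θ.1 - μstar| ≤ |θ.1 - Y ω| + |Y ω - μstar| :=
            abs_sub_le θ.1 (Y ω) μstar
          have hfar : C / 4 ≤ |Y ω - θ.1| := by
            rw [abs_sub_comm]; linarith
          exact gauss_far (lt_of_lt_of_le hσlb hθ2) hCpos hfar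
      have hintg2 : Integrable (fun ω => 4 / C + A.indicator (fun _ => B₀) ω) P :=
        (integrable_const (4 / C)).add ((integrable_const B₀).indicator hA)
      have hi1 : ∫ ω, gaussDens θ.1 θ.2 (Y ω) ∂P
          ≤ ∫ ω, (4 / C + A.indicator (fun _ => B₀) ω) ∂P :=
        integral_mono (hintg θ.1 θ.2 hθ2) hintg2 hpoint
      have hi2 : ∫ ω, (4 / C + A.indicator (fun _ => B₀) ω) ∂P
          = 4 / C + (P A).toReal * B₀ := by
        rw [integral_add (integrable_const _) ((integrable_const B₀).indicator hA),
          integral_const, integral_indicator_const _ hA]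
        simp
        exact Or.inl rfl
      have hmarkov : C / 4 * (P A).toReal ≤ E := by
        rw [hEdef]
        exact mul_meas_ge_le_integral_of_nonneg
          (ae_of_all _ fun ω => abs_nonneg (Y ω - μstar)) hint (C / 4)
      have hPA : (P A).toReal ≤ 4 * E / C := by
        rw [le_div_iff₀ hCpos]
        nlinarith
      have hfin : 4 / C + (P A).toReal * B₀ ≤ C' * (Real.sqrt C)⁻¹ := by
        have h1 : 4 / C + (P A).toReal * B₀ ≤ 4 / C + 4 * E / C * B₀ :=
          add_le_add le_rfl (mul_le_mul_of_nonneg_right hPA hB₀pos.le)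
        have h2 : 4 / C + 4 * E / C * B₀ = (4 + 4 * B₀ * E) / C := by
          field_simp
        have h3 : (4 + 4 * B₀ * E) / C ≤ (4 + 4 * B₀ * E) * (Real.sqrt C)⁻¹ := by
          rw [div_eq_mul_inv]
          exact mul_le_mul_of_nonneg_left (inv_anti₀ hsCpos hsC) (by positivity)
        have h4 : (4 + 4 * B₀ * E) * (Real.sqrt C)⁻¹ ≤ C' * (Real.sqrt C)⁻¹ := by
          apply mul_le_mul_of_nonneg_right _ (by positivity)
          rw [hC'def]; linarith
        linarith
      linarith [hi1, hi2.le, hfin]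
    · -- σ is far
      have hfar2 : (C / 2) ^ 2 ≤ (θ.2 - σstar) ^ 2 := by nlinarith
      have hσfar : C / 2 ≤ |θ.2 - σstar| := by
        have := Real.sqrt_le_sqrt hfar2
        rwa [Real.sqrt_sq (by positivity), Real.sqrt_sq_eq_abs] at this
      have hθ2big : C / 2 ≤ θ.2 := by
        rcases abs_cases (θ.2 - σstar) with ⟨h, _⟩ | ⟨h, _⟩
        · rw [hC₀def] at hC; linarith
        · exfalso; rw [hC₀def] at hC; linarith
      have hi1 : ∫ ω, gaussDens θ.1 θ.2 (Y ω) ∂P ≤ (Real.sqrt (2 * Real.pi * θ.2))⁻¹ := by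
        calc ∫ ω, gaussDens θ.1 θ.2 (Y ω) ∂P ≤ ∫ _ω, (Real.sqrt (2 * Real.pi * θ.2))⁻¹ ∂P :=
              integral_mono (hintg θ.1 θ.2 hθ2) (integrable_const _)
                (fun ω => gauss_le_inv θ.1 θ.2 (Y ω) (lt_of_lt_of_le hσlb hθ2))
          _ = (Real.sqrt (2 * Real.pi * θ.2))⁻¹ := by simp
      have hθ2pos : 0 < θ.2 := lt_of_lt_of_le hσlb hθ2
      have hi2 : (Real.sqrt (2 * Real.pi * θ.2))⁻¹ ≤ (Real.sqrt C)⁻¹ := by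
        apply inv_anti₀ hsCpos
        apply Real.sqrt_le_sqrt
        have hp : 3 * θ.2 ≤ Real.pi * θ.2 :=
          mul_le_mul_of_nonneg_right (by linarith [Real.pi_gt_three]) hθ2pos.le
        linarith
      calc ∫ ω, gaussDens θ.1 θ.2 (Y ω) ∂P ≤ (Real.sqrt C)⁻¹ := hi1.trans hi2
        _ ≤ C' * (Real.sqrt C)⁻¹ := by
            nth_rewrite 1 [← one_mul (Real.sqrt C)⁻¹]
            apply mul_le_mul_of_nonneg_right _ (by positivity)
            rw [hC'def]; nlinarith [mul_nonneg hB₀pos.le hEnn]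
  refine ⟨⟨C', C₀, fun C hC => hmain C hC⟩, ?_⟩
  -- Part 2: the limsup bound
  obtain ⟨c, hcdef⟩ : ∃ x : ℝ, x = 1 / 2 * (Real.sqrt (2 * Real.pi * (1 + σstar)))⁻¹ := ⟨_, rfl⟩
  have hcpos : 0 < c := by rw [hcdef]; positivity
  have hkey : ∀ᶠ C in atTop,
      Real.log c / Real.log C - 1 / 2 ≤
        Real.log (sSup {x : ℝ | ∃ θ : ℝ × ℝ, σlb ≤ θ.2 ∧
          C ≤ Real.sqrt ((θ.1 - μstar) ^ 2 + (θ.2 - σstar) ^ 2) ∧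
          x = ∫ ω, gaussDens θ.1 θ.2 (Y ω) ∂P}) / Real.log C ∧
      Real.log (sSup {x : ℝ | ∃ θ : ℝ × ℝ, σlb ≤ θ.2 ∧
          C ≤ Real.sqrt ((θ.1 - μstar) ^ 2 + (θ.2 - σstar) ^ 2) ∧
          x = ∫ ω, gaussDens θ.1 θ.2 (Y ω) ∂P}) / Real.log C ≤
        Real.log C' / Real.log C - 1 / 2 := by
    filter_upwards [eventually_ge_atTop C₀, eventually_ge_atTop (3 : ℝ),
      eventually_ge_atTop (2 * E ^ 2 + 1)] with C hC0 hC3 hCE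
    have hCpos : (0 : ℝ) < C := by linarith
    have hC1 : (1 : ℝ) ≤ C := by linarith
    have hsCpos : 0 < Real.sqrt C := Real.sqrt_pos.mpr hCpos
    have hlogC : 0 < Real.log C := Real.log_pos (by linarith)
    have hrpow : C ^ (-(1 : ℝ) / 2) = (Real.sqrt C)⁻¹ := by
      rw [show (-(1 : ℝ) / 2) = -(1 / 2) by ring, Real.rpow_neg hCpos.le, ← Real.sqrt_eq_rpow]
    -- the witness parameter
    obtain ⟨s, hsdef⟩ : ∃ x : ℝ, x = σstar + C := ⟨_, rfl⟩
    have hspos : 0 < s := by rw [hsdef]; linarith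
    have hsσlb : σlb ≤ s := by rw [hsdef]; linarith
    obtain ⟨K, hKdef⟩ : ∃ x : ℝ, x = (Real.sqrt (2 * Real.pi * s))⁻¹ := ⟨_, rfl⟩
    have hKpos : 0 < K := by rw [hKdef]; positivity
    -- lower bound for the witness integral
    have hpoint : ∀ ω, K - K * (Real.sqrt (2 * s))⁻¹ * |Y ω - μstar|
        ≤ gaussDens μstar s (Y ω) := by
      intro ω
      obtain ⟨u, hudef⟩ : ∃ x : ℝ, x = (Real.sqrt (2 * s))⁻¹ * |Y ω - μstar| := ⟨_, rfl⟩
      have hu : 0 ≤ u := by rw [hudef]; positivity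
      have hexp : -(Y ω - μstar) ^ 2 / (2 * s) = -(u ^ 2) := by
        rw [hudef, mul_pow, inv_pow, Real.sq_sqrt (by positivity), sq_abs]
        field_simp
      have h1 : 1 - u ≤ Real.exp (-(u ^ 2)) := one_sub_le_exp_neg_sq hu
      have h2 : K * (1 - u) ≤ K * Real.exp (-(u ^ 2)) :=
        mul_le_mul_of_nonneg_left h1 hKpos.le
      unfold gaussDens
      rw [← hKdef, hexp]
      calc K - K * (Real.sqrt (2 * s))⁻¹ * |Y ω - μstar| = K * (1 - u) := by
            rw [hudef]; ring
        _ ≤ K * Real.exp (-(u ^ 2)) := h2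
    have hintlow : Integrable
        (fun ω => K - K * (Real.sqrt (2 * s))⁻¹ * |Y ω - μstar|) P :=
      (integrable_const K).sub (hint.const_mul _)
    have hilow : K - K * (Real.sqrt (2 * s))⁻¹ * E
        ≤ ∫ ω, gaussDens μstar s (Y ω) ∂P := by
      have h1 : ∫ ω, (K - K * (Real.sqrt (2 * s))⁻¹ * |Y ω - μstar|) ∂P
          = K - K * (Real.sqrt (2 * s))⁻¹ * E := by
        rw [integral_sub (integrable_const K) (hint.const_mul _), integral_const,
          integral_const_mul, hEdef]
        simp
      rw [← h1]
      exact integral_mono hintlow (hintg μstar s hsσlb) hpoint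
    -- the subtracted term is at most K/2
    have h2E : 2 * E ≤ Real.sqrt (2 * s) := by
      rw [show 2 * E = Real.sqrt ((2 * E) ^ 2) by rw [Real.sqrt_sq (by positivity)]]
      apply Real.sqrt_le_sqrt
      rw [hsdef]; nlinarith
    have hs2pos : 0 < Real.sqrt (2 * s) := Real.sqrt_pos.mpr (by positivity)
    have hhalf : K * (Real.sqrt (2 * s))⁻¹ * E ≤ K / 2 := by
      have h3 : (Real.sqrt (2 * s))⁻¹ * E ≤ 1 / 2 := by
        rw [inv_mul_eq_div, div_le_iff₀ hs2pos]
        nlinarith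
      calc K * (Real.sqrt (2 * s))⁻¹ * E = K * ((Real.sqrt (2 * s))⁻¹ * E) := by ring
        _ ≤ K * (1 / 2) := mul_le_mul_of_nonneg_left h3 hKpos.le
        _ = K / 2 := by ring
    -- K/2 is at least c / sqrt C
    have hKge : c * (Real.sqrt C)⁻¹ ≤ K / 2 := by
      have hsqle : Real.sqrt (2 * Real.pi * s)
          ≤ Real.sqrt (2 * Real.pi * (1 + σstar)) * Real.sqrt C := by
        rw [← Real.sqrt_mul (by positivity)]
        apply Real.sqrt_le_sqrt
        rw [hsdef]
        nlinarith [Real.pi_pos, mul_pos Real.pi_pos hσstar0]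
      have h4 : (Real.sqrt (2 * Real.pi * (1 + σstar)) * Real.sqrt C)⁻¹ ≤ K := by
        rw [hKdef]
        exact inv_anti₀ (by positivity) hsqle
      rw [hcdef, mul_inv] at *
      nlinarith [h4]
    have hx₀low : c * (Real.sqrt C)⁻¹ ≤ ∫ ω, gaussDens μstar s (Y ω) ∂P := by
      calc c * (Real.sqrt C)⁻¹ ≤ K / 2 := hKge
        _ ≤ K - K * (Real.sqrt (2 * s))⁻¹ * E := by linarith
        _ ≤ _ := hilow
    -- the witness is in the set
    have hmem : (∫ ω, gaussDens μstar s (Y ω) ∂P) ∈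
        {x : ℝ | ∃ θ : ℝ × ℝ, σlb ≤ θ.2 ∧
          C ≤ Real.sqrt ((θ.1 - μstar) ^ 2 + (θ.2 - σstar) ^ 2) ∧
          x = ∫ ω, gaussDens θ.1 θ.2 (Y ω) ∂P} := by
      refine ⟨(μstar, s), hsσlb, ?_, rfl⟩
      have h5 : (μstar - μstar) ^ 2 + (s - σstar) ^ 2 = C ^ 2 := by rw [hsdef]; ring
      rw [h5, Real.sqrt_sq hCpos.le]
    -- the set is bounded above
    have hbdd : BddAbove {x : ℝ | ∃ θ : ℝ × ℝ, σlb ≤ θ.2 ∧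
          C ≤ Real.sqrt ((θ.1 - μstar) ^ 2 + (θ.2 - σstar) ^ 2) ∧
          x = ∫ ω, gaussDens θ.1 θ.2 (Y ω) ∂P} := by
      refine ⟨B₀, ?_⟩
      rintro x ⟨θ, hθ2, -, rfl⟩
      calc ∫ ω, gaussDens θ.1 θ.2 (Y ω) ∂P ≤ ∫ _ω, B₀ ∂P :=
            integral_mono (hintg θ.1 θ.2 hθ2) (integrable_const _)
              (fun ω => hptB θ.1 θ.2 (Y ω) hθ2)
        _ = B₀ := by simp
    -- sSup bounds
    have hsup_ge : c * (Real.sqrt C)⁻¹ ≤ sSup {x : ℝ | ∃ θ : ℝ × ℝ, σlb ≤ θ.2 ∧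
          C ≤ Real.sqrt ((θ.1 - μstar) ^ 2 + (θ.2 - σstar) ^ 2) ∧
          x = ∫ ω, gaussDens θ.1 θ.2 (Y ω) ∂P} :=
      hx₀low.trans (le_csSup hbdd hmem)
    have hsup_le : sSup {x : ℝ | ∃ θ : ℝ × ℝ, σlb ≤ θ.2 ∧
          C ≤ Real.sqrt ((θ.1 - μstar) ^ 2 + (θ.2 - σstar) ^ 2) ∧
          x = ∫ ω, gaussDens θ.1 θ.2 (Y ω) ∂P} ≤ C' * (Real.sqrt C)⁻¹ := by
      apply Real.sSup_le _ (by positivity)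
      rintro x ⟨θ, hθ2, hdist, rfl⟩
      have := hmain C hC0 θ hθ2 hdist
      rwa [hrpow] at this
    have hsuppos : 0 < sSup {x : ℝ | ∃ θ : ℝ × ℝ, σlb ≤ θ.2 ∧
          C ≤ Real.sqrt ((θ.1 - μstar) ^ 2 + (θ.2 - σstar) ^ 2) ∧
          x = ∫ ω, gaussDens θ.1 θ.2 (Y ω) ∂P} :=
      lt_of_lt_of_le (by positivity) hsup_ge
    have hlogmul : ∀ a : ℝ, 0 < a →
        Real.log (a * (Real.sqrt C)⁻¹) = Real.log a - Real.log C / 2 := by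
      intro a ha
      rw [Real.log_mul ha.ne' (by positivity), Real.log_inv, Real.log_sqrt hCpos.le]
      ring
    constructor
    · have h6 : Real.log (c * (Real.sqrt C)⁻¹) ≤ Real.log (sSup _) :=
        Real.log_le_log (by positivity) hsup_ge
      rw [hlogmul c hcpos] at h6
      rw [show Real.log c / Real.log C - 1 / 2
          = (Real.log c - Real.log C / 2) / Real.log C by
        field_simp [hlogC.ne']]
      exact (div_le_div_iff_of_pos_right hlogC).mpr h6
    · have h7 : Real.log (sSup _) ≤ Real.log (C' * (Real.sqrt C)⁻¹) :=
        Real.log_le_log hsuppos hsup_le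
      rw [hlogmul C' hC'pos] at h7
      rw [show Real.log C' / Real.log C - 1 / 2
          = (Real.log C' - Real.log C / 2) / Real.log C by
        field_simp [hlogC.ne']]
      exact (div_le_div_iff_of_pos_right hlogC).mpr h7
  -- squeeze
  have t1 : Tendsto (fun C : ℝ => Real.log c / Real.log C - 1 / 2) atTop
      (nhds (-(1 / 2))) := by
    have h0 : Tendsto (fun C : ℝ => Real.log c / Real.log C) atTop (nhds 0) :=
      tendsto_const_nhds.div_atTop Real.tendsto_log_atTop
    have := h0.sub (tendsto_const_nhds (x := (1 / 2 : ℝ)))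
    simpa using this
  have t2 : Tendsto (fun C : ℝ => Real.log C' / Real.log C - 1 / 2) atTop
      (nhds (-(1 / 2))) := by
    have h0 : Tendsto (fun C : ℝ => Real.log C' / Real.log C) atTop (nhds 0) :=
      tendsto_const_nhds.div_atTop Real.tendsto_log_atTop
    have := h0.sub (tendsto_const_nhds (x := (1 / 2 : ℝ)))
    simpa using this
  have hT : Tendsto (fun C : ℝ =>
      Real.log (sSup {x : ℝ | ∃ θ : ℝ × ℝ, σlb ≤ θ.2 ∧
        C ≤ Real.sqrt ((θ.1 - μstar) ^ 2 + (θ.2 - σstar) ^ 2) ∧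
        x = ∫ ω, gaussDens θ.1 θ.2 (Y ω) ∂P}) / Real.log C) atTop (nhds (-(1 / 2))) :=
    tendsto_of_tendsto_of_tendsto_of_le_of_le' t1 t2
      (hkey.mono fun C h => h.1) (hkey.mono fun C h => h.2)
  exact hT.limsup_eq.le
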